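/- Consider a database D, a canonical set Σ of FDs with an LHS chain, and an SJFCQ Q. Then rfreq(Q, D, Σ) = rfreq(Q, D \ (D_conf^{Σ,Q} ∪ D_ind^{Σ,Q}), Σ) × (|rep(D \ D_conf^{Σ,Q}, Σ)| / |rep(D, Σ)|). -/

import Mathlib

open scoped Classical

/-- A fact over relation name `rel`, assigning a constant to each attribute. -/
structure DBFact (Rel Attr Const : Type*) where
  rel : Rel
  val : Attr → Const

/-- A functional dependency `rel : lhs → rhs`. -/
structure DBFD (Rel Attr : Type*) where
  rel : Rel
  lhs : Set Attr
  rhs : Set Attr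

/-- A term of a conjunctive query: a variable or a constant. -/
inductive DBTerm (Var Const : Type*) where
  | var : Var → DBTerm Var Const
  | const : Const → DBTerm Var Const

/-- An atom of a conjunctive query. -/
structure DBAtom (Rel Attr Var Const : Type*) where
  rel : Rel
  val : Attr → DBTerm Var Const

variable {Rel Attr Var Const : Type*}

/-- A database satisfies a single FD. -/
def satFD (D : Finset (DBFact Rel Attr Const)) (φ : DBFD Rel Attr) : Prop :=
  ∀ f ∈ D, ∀ g ∈ D, f.rel = φ.rel → g.rel = φ.rel →
    (∀ A ∈ φ.lhs, f.val A = g.val A) → ∀ A ∈ φ.rhs, f.val A = g.val A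

/-- A database satisfies a set of FDs. -/
def satFDs (D : Finset (DBFact Rel Attr Const)) (S : Set (DBFD Rel Attr)) : Prop :=
  ∀ φ ∈ S, satFD D φ

/-- `E` is a repair of `D` w.r.t. `S`: an inclusion-maximal consistent subset of `D`. -/
def isRepair (S : Set (DBFD Rel Attr)) (D E : Finset (DBFact Rel Attr Const)) : Prop :=
  E ⊆ D ∧ satFDs E S ∧ ∀ F, E ⊆ F → F ⊆ D → satFDs F S → F = E

/-- The set of repairs of `D` w.r.t. `S`. -/
noncomputable def rep (D : Finset (DBFact Rel Attr Const)) (S : Set (DBFD Rel Attr)) :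
    Finset (Finset (DBFact Rel Attr Const)) :=
  D.powerset.filter (fun E => isRepair S D E)

/-- Applying a homomorphism (a map from variables to constants) to an atom yields a fact. -/
def applyHom (h : Var → Const) (α : DBAtom Rel Attr Var Const) : DBFact Rel Attr Const :=
  ⟨α.rel, fun A => match α.val A with
    | DBTerm.var v => h v
    | DBTerm.const c => c⟩

/-- `D ⊨ Q`: there is a homomorphism from the CQ `Q` into `D`. -/
def entails (D : Finset (DBFact Rel Attr Const)) (Q : Finset (DBAtom Rel Attr Var Const)) :
    Prop :=
  ∃ h : Var → Const, ∀ α ∈ Q, applyHom h α ∈ D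

/-- The repairs of `D` w.r.t. `S` that entail `Q`. -/
noncomputable def repQ (D : Finset (DBFact Rel Attr Const)) (S : Set (DBFD Rel Attr))
    (Q : Finset (DBAtom Rel Attr Var Const)) : Finset (Finset (DBFact Rel Attr Const)) :=
  (rep D S).filter (fun E => entails E Q)

/-- The relative frequency of `Q` w.r.t. `D` and `S`. -/
noncomputable def rfreq (Q : Finset (DBAtom Rel Attr Var Const))
    (D : Finset (DBFact Rel Attr Const)) (S : Set (DBFD Rel Attr)) : ℚ :=
  ((repQ D S Q).card : ℚ) / ((rep D S).card : ℚ)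

/-- `Q` is self-join-free: no relation name occurs in two distinct atoms. -/
def sjf (Q : Finset (DBAtom Rel Attr Var Const)) : Prop :=
  ∀ α ∈ Q, ∀ β ∈ Q, α.rel = β.rel → α = β

/-- A canonical set of FDs with an LHS chain, given by the chain
`R : X₁ → Y₁, …, R : Xₙ → Yₙ` for each relation name `R`, with
`X₁ ⊊ X₂ ⊊ ⋯ ⊊ Xₙ`, each `Y_i` nonempty, `X_i ∩ Y_j = ∅` for all `i,j`,
and `Y_i ∩ Y_j = ∅` for `i ≠ j`. -/
def canonicalChain (chain : Rel → List (Set Attr × Set Attr)) : Prop :=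
  ∀ R : Rel,
    ((chain R).Pairwise fun a b => a.1 ⊂ b.1) ∧
    (∀ xy ∈ chain R, (xy.2 : Set Attr).Nonempty) ∧
    (∀ xy ∈ chain R, ∀ xy' ∈ chain R, xy.1 ∩ xy'.2 = ∅) ∧
    ((chain R).Pairwise fun a b => a.2 ∩ b.2 = ∅)

/-- The set of FDs induced by a chain. -/
def chainFDs (chain : Rel → List (Set Attr × Set Attr)) : Set (DBFD Rel Attr) :=
  {φ | ∃ xy ∈ chain φ.rel, φ.lhs = xy.1 ∧ φ.rhs = xy.2}

/-- The `i`-th FD of the chain `L` has some attribute carrying a variable in atom `α`. -/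
def chainVarAt (L : List (Set Attr × Set Attr)) (α : DBAtom Rel Attr Var Const) (i : ℕ) :
    Prop :=
  ∃ xy, L[i]? = some xy ∧ ∃ A ∈ xy.1 ∪ xy.2, ∃ v, α.val A = DBTerm.var v

/-- The index of the primary FD of the chain `L` w.r.t. the atom `α` (if it exists):
the first FD some of whose attributes carries a variable in `α`. -/
noncomputable def primaryIdx (L : List (Set Attr × Set Attr))
    (α : DBAtom Rel Attr Var Const) : Option ℕ :=
  if h : ∃ i, chainVarAt L α i then some (Nat.find h) else none

/-- The primary FD of the chain `L` w.r.t. the atom `α` (if it exists). -/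
noncomputable def primaryFD (L : List (Set Attr × Set Attr))
    (α : DBAtom Rel Attr Var Const) : Option (Set Attr × Set Attr) :=
  (primaryIdx L α).bind fun i => L[i]?

/-- The primary prefix of the chain `L` w.r.t. the atom `α`: the FDs strictly before the
primary FD, or the whole chain if there is no primary FD. -/
noncomputable def primaryPrefix (L : List (Set Attr × Set Attr))
    (α : DBAtom Rel Attr Var Const) : List (Set Attr × Set Attr) :=
  L.take ((primaryIdx L α).getD L.length)

/-- The primary-lhs positions (attributes) of the atom `α` w.r.t. the chain `L`. -/
noncomputable def primaryLhs (L : List (Set Attr × Set Attr))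
    (α : DBAtom Rel Attr Var Const) : Set Attr :=
  match primaryFD L α with
  | some xy => xy.1
  | none => Set.univ

/-- The variables of `α` occurring at primary-lhs positions. -/
noncomputable def pvar (L : List (Set Attr × Set Attr))
    (α : DBAtom Rel Attr Var Const) : Set Var :=
  {v | ∃ A ∈ primaryLhs L α, α.val A = DBTerm.var v}

/-- A liaison variable of `Q`: a variable with more than one occurrence in `Q`. -/
def liaison (Q : Finset (DBAtom Rel Attr Var Const)) (v : Var) : Prop :=
  ∃ α ∈ Q, ∃ β ∈ Q, ∃ A B, α.val A = DBTerm.var v ∧ β.val B = DBTerm.var v ∧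
    (α ≠ β ∨ A ≠ B)

/-- The complex part `comp(Q,Σ)` of `Q` w.r.t. the chain. -/
noncomputable def compPart (chain : Rel → List (Set Attr × Set Attr))
    (Q : Finset (DBAtom Rel Attr Var Const)) : Finset (DBAtom Rel Attr Var Const) :=
  Q.filter fun α => ∃ A, A ∉ primaryLhs (chain α.rel) α ∧
    ((∃ c, α.val A = DBTerm.const c) ∨ ∃ v, α.val A = DBTerm.var v ∧ liaison Q v) ∧
    ∀ xy ∈ primaryPrefix (chain α.rel) α, A ∉ xy.1 ∪ xy.2

/-- The fact `f` agrees with the atom `α` at attribute `A`, i.e. `α[A]` is the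
constant `f[A]`. -/
def agreesAt (f : DBFact Rel Attr Const) (α : DBAtom Rel Attr Var Const) (A : Attr) : Prop :=
  α.val A = DBTerm.const (f.val A)

/-- `D_conf^{Σ,Q}`: the facts of `D` conflicting with `Q` via an FD of the primary prefix. -/
noncomputable def dconf (chain : Rel → List (Set Attr × Set Attr))
    (Q : Finset (DBAtom Rel Attr Var Const)) (D : Finset (DBFact Rel Attr Const)) :
    Finset (DBFact Rel Attr Const) :=
  D.filter fun f => ∃ α ∈ Q, α.rel = f.rel ∧
    ∃ xy ∈ primaryPrefix (chain α.rel) α,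
      (∀ A ∈ xy.1, agreesAt f α A) ∧ ∃ B ∈ xy.2, ¬ agreesAt f α B

/-- `D_ind^{Σ,Q}`: the facts of `D \ D_conf^{Σ,Q}` disagreeing with `Q` on the lhs of an
FD of the primary prefix. -/
noncomputable def dind (chain : Rel → List (Set Attr × Set Attr))
    (Q : Finset (DBAtom Rel Attr Var Const)) (D : Finset (DBFact Rel Attr Const)) :
    Finset (DBFact Rel Attr Const) :=
  (D \ dconf chain Q D).filter fun f => ∃ α ∈ Q, α.rel = f.rel ∧
    ∃ xy ∈ primaryPrefix (chain α.rel) α, ∃ A ∈ xy.1, ¬ agreesAt f α A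

/-- The active domain of `D`: the constants occurring in `D`. -/
noncomputable def adom [Fintype Attr] (D : Finset (DBFact Rel Attr Const)) : Finset Const :=
  D.biUnion fun f => Finset.univ.image f.val

/-- Substituting a constant for a variable in a term. -/
noncomputable def substTerm (x : Var) (c : Const) : DBTerm Var Const → DBTerm Var Const
  | DBTerm.var v => if v = x then DBTerm.const c else DBTerm.var v
  | DBTerm.const d => DBTerm.const d

/-- Substituting a constant for a variable in an atom. -/
noncomputable def substAtom (x : Var) (c : Const) (α : DBAtom Rel Attr Var Const) :
    DBAtom Rel Attr Var Const :=
  ⟨α.rel, fun A => substTerm x c (α.val A)⟩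

/-- `Q_{x↦c}`: the query obtained from `Q` by replacing the variable `x` with `c`. -/
noncomputable def substQ (x : Var) (c : Const) (Q : Finset (DBAtom Rel Attr Var Const)) :
    Finset (DBAtom Rel Attr Var Const) :=
  Q.image (substAtom x c)

/-- The variables occurring in `Q`. -/
def qvars (Q : Finset (DBAtom Rel Attr Var Const)) : Set Var :=
  {v | ∃ α ∈ Q, ∃ A, α.val A = DBTerm.var v}

/-- `S` has an LHS chain: the left-hand sides of FDs over the same relation are
⊆-comparable. -/
def hasLHSChain (S : Set (DBFD Rel Attr)) : Prop :=
  ∀ φ ∈ S, ∀ ψ ∈ S, φ.rel = ψ.rel → φ.lhs ⊆ ψ.lhs ∨ ψ.lhs ⊆ φ.lhs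



section AuxStmt6
variable {Rel Attr Var Const : Type*}

/-- Two facts jointly violate some FD of `S`. -/
def aux_conflict (S : Set (DBFD Rel Attr)) (f g : DBFact Rel Attr Const) : Prop :=
  ∃ φ ∈ S, f.rel = φ.rel ∧ g.rel = φ.rel ∧
    (∀ A ∈ φ.lhs, f.val A = g.val A) ∧ ∃ B ∈ φ.rhs, f.val B ≠ g.val B

lemma aux_conflict_symm {S : Set (DBFD Rel Attr)} {f g : DBFact Rel Attr Const}
    (h : aux_conflict S f g) : aux_conflict S g f := by
  obtain ⟨φ, hφ, h1, h2, h3, B, hB, hne⟩ := h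
  exact ⟨φ, hφ, h2, h1, fun A hA => (h3 A hA).symm, B, hB, fun e => hne e.symm⟩

lemma aux_satFDs_iff {S : Set (DBFD Rel Attr)} {E : Finset (DBFact Rel Attr Const)} :
    satFDs E S ↔ ∀ f ∈ E, ∀ g ∈ E, ¬ aux_conflict S f g := by
  constructor
  · rintro h f hf g hg ⟨φ, hφ, h1, h2, h3, B, hB, hne⟩
    exact hne (h φ hφ f hf g hg h1 h2 h3 B hB)
  · intro h φ hφ f hf g hg h1 h2 h3 B hB
    by_contra hne
    exact h f hf g hg ⟨φ, hφ, h1, h2, h3, B, hB, hne⟩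

lemma aux_satFDs_subset {S : Set (DBFD Rel Attr)} {E F : Finset (DBFact Rel Attr Const)}
    (hEF : E ⊆ F) (hF : satFDs F S) : satFDs E S :=
  fun φ hφ f hf g hg => hF φ hφ f (hEF hf) g (hEF hg)

lemma aux_mem_rep {X E : Finset (DBFact Rel Attr Const)} {S : Set (DBFD Rel Attr)} :
    E ∈ rep X S ↔ isRepair S X E := by
  simp only [rep, Finset.mem_filter, Finset.mem_powerset]
  exact ⟨fun h => h.2, fun h => ⟨h.1, h⟩⟩

lemma aux_rep_nonempty (X : Finset (DBFact Rel Attr Const)) (S : Set (DBFD Rel Attr)) :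
    (rep X S).Nonempty := by
  have h0 : (∅ : Finset (DBFact Rel Attr Const)) ∈ X.powerset.filter (fun E => satFDs E S) := by
    simp only [Finset.mem_filter, Finset.mem_powerset]
    exact ⟨Finset.empty_subset X, fun φ hφ f hf => absurd hf (Finset.notMem_empty f)⟩
  obtain ⟨E, hE, hmax⟩ := (X.powerset.filter (fun E => satFDs E S)).exists_max_image
    Finset.card ⟨∅, h0⟩
  simp only [Finset.mem_filter, Finset.mem_powerset] at hE
  refine ⟨E, aux_mem_rep.2 ⟨hE.1, hE.2, fun F hEF hFX hF => ?_⟩⟩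
  have hFmem : F ∈ X.powerset.filter (fun E => satFDs E S) := by
    simp only [Finset.mem_filter, Finset.mem_powerset]; exact ⟨hFX, hF⟩
  exact (Finset.eq_of_subset_of_card_le hEF (hmax F hFmem)).symm

lemma aux_isRepair_inter {S : Set (DBFD Rel Attr)} {A B E : Finset (DBFact Rel Attr Const)}
    (hnc : ∀ f ∈ A, ∀ g ∈ B, ¬ aux_conflict S f g)
    (hE : isRepair S (A ∪ B) E) : isRepair S A (E ∩ A) := by
  obtain ⟨hsub, hsat, hmax⟩ := hE
  refine ⟨Finset.inter_subset_right, aux_satFDs_subset Finset.inter_subset_left hsat, ?_⟩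
  intro F hEF hFA hF
  have hsat' : satFDs (F ∪ E ∩ B) S := by
    rw [aux_satFDs_iff] at hF hsat ⊢
    intro f hf g hg
    rcases Finset.mem_union.1 hf with hf | hf <;> rcases Finset.mem_union.1 hg with hg | hg
    · exact hF f hf g hg
    · exact hnc f (hFA hf) g (Finset.mem_inter.1 hg).2
    · exact fun hc => hnc g (hFA hg) f (Finset.mem_inter.1 hf).2 (aux_conflict_symm hc)
    · exact hsat f (Finset.mem_inter.1 hf).1 g (Finset.mem_inter.1 hg).1
  have hEsub : E ⊆ F ∪ E ∩ B := by
    intro e he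
    rcases Finset.mem_union.1 (hsub he) with h | h
    · exact Finset.mem_union_left _ (hEF (Finset.mem_inter.2 ⟨he, h⟩))
    · exact Finset.mem_union_right _ (Finset.mem_inter.2 ⟨he, h⟩)
  have hsub' : F ∪ E ∩ B ⊆ A ∪ B :=
    Finset.union_subset (hFA.trans Finset.subset_union_left)
      (Finset.inter_subset_right.trans Finset.subset_union_right)
  have heq := hmax _ hEsub hsub' hsat'
  apply Finset.Subset.antisymm _ hEF
  intro x hx
  have hxE : x ∈ E := heq ▸ Finset.mem_union_left _ hx
  exact Finset.mem_inter.2 ⟨hxE, hFA hx⟩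

lemma aux_isRepair_inter_right {S : Set (DBFD Rel Attr)} {A B E : Finset (DBFact Rel Attr Const)}
    (hnc : ∀ f ∈ A, ∀ g ∈ B, ¬ aux_conflict S f g)
    (hE : isRepair S (A ∪ B) E) : isRepair S B (E ∩ B) := by
  rw [Finset.union_comm] at hE
  exact aux_isRepair_inter (fun f hf g hg hc => hnc g hg f hf (aux_conflict_symm hc)) hE

lemma aux_isRepair_union {S : Set (DBFD Rel Attr)} {A B E F : Finset (DBFact Rel Attr Const)}
    (hnc : ∀ f ∈ A, ∀ g ∈ B, ¬ aux_conflict S f g)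
    (hE : isRepair S A E) (hF : isRepair S B F) : isRepair S (A ∪ B) (E ∪ F) := by
  obtain ⟨hEA, hEsat, hEmax⟩ := hE
  obtain ⟨hFB, hFsat, hFmax⟩ := hF
  refine ⟨Finset.union_subset_union hEA hFB, ?_, ?_⟩
  · rw [aux_satFDs_iff] at hEsat hFsat ⊢
    intro f hf g hg
    rcases Finset.mem_union.1 hf with hf | hf <;> rcases Finset.mem_union.1 hg with hg | hg
    · exact hEsat f hf g hg
    · exact hnc f (hEA hf) g (hFB hg)
    · exact fun hc => hnc g (hEA hg) f (hFB hf) (aux_conflict_symm hc)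
    · exact hFsat f hf g hg
  · intro G hG hGsub hGsat
    have hGA : G ∩ A = E := by
      apply hEmax
      · intro x hx; exact Finset.mem_inter.2 ⟨hG (Finset.mem_union_left _ hx), hEA hx⟩
      · exact Finset.inter_subset_right
      · exact aux_satFDs_subset Finset.inter_subset_left hGsat
    have hGB : G ∩ B = F := by
      apply hFmax
      · intro x hx; exact Finset.mem_inter.2 ⟨hG (Finset.mem_union_right _ hx), hFB hx⟩
      · exact Finset.inter_subset_right
      · exact aux_satFDs_subset Finset.inter_subset_left hGsat
    rw [← hGA, ← hGB, ← Finset.inter_union_distrib_left]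
    exact (Finset.inter_eq_left.2 hGsub).symm

lemma aux_card_split {S : Set (DBFD Rel Attr)} {A B : Finset (DBFact Rel Attr Const)}
    (hd : Disjoint A B)
    (hnc : ∀ f ∈ A, ∀ g ∈ B, ¬ aux_conflict S f g)
    (p : Finset (DBFact Rel Attr Const) → Prop)
    (hp : ∀ E, E ⊆ A ∪ B → (p E ↔ p (E ∩ A))) :
    ((rep (A ∪ B) S).filter (fun E => p E)).card =
      ((rep A S).filter (fun E => p E)).card * (rep B S).card := by
  have key : ∀ E F : Finset (DBFact Rel Attr Const), E ⊆ A → F ⊆ B →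
      (E ∪ F) ∩ A = E ∧ (E ∪ F) ∩ B = F := by
    intro E F hEA hFB
    constructor
    · apply Finset.Subset.antisymm
      · intro x hx
        obtain ⟨hx1, hx2⟩ := Finset.mem_inter.1 hx
        rcases Finset.mem_union.1 hx1 with h | h
        · exact h
        · exact absurd hx2 (Finset.disjoint_right.1 hd (hFB h))
      · intro x hx; exact Finset.mem_inter.2 ⟨Finset.mem_union_left _ hx, hEA hx⟩
    · apply Finset.Subset.antisymm
      · intro x hx
        obtain ⟨hx1, hx2⟩ := Finset.mem_inter.1 hx
        rcases Finset.mem_union.1 hx1 with h | h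
        · exact absurd hx2 (Finset.disjoint_left.1 hd (hEA h))
        · exact h
      · intro x hx; exact Finset.mem_inter.2 ⟨Finset.mem_union_right _ hx, hFB hx⟩
  rw [← Finset.card_product]
  apply Finset.card_bij' (fun E _ => (E ∩ A, E ∩ B)) (fun EF _ => EF.1 ∪ EF.2)
  · intro E hE
    obtain ⟨hrep, hpE⟩ := Finset.mem_filter.1 hE
    rw [aux_mem_rep] at hrep
    rw [Finset.mem_product]
    refine ⟨Finset.mem_filter.2 ⟨aux_mem_rep.2 (aux_isRepair_inter hnc hrep), ?_⟩,
      aux_mem_rep.2 (aux_isRepair_inter_right hnc hrep)⟩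
    exact (hp E hrep.1).1 hpE
  · intro EF hEF
    rw [Finset.mem_product] at hEF
    obtain ⟨hE, hF⟩ := hEF
    obtain ⟨hErep, hpE⟩ := Finset.mem_filter.1 hE
    rw [aux_mem_rep] at hErep
    have hFrep := aux_mem_rep.1 hF
    have hrep := aux_isRepair_union hnc hErep hFrep
    refine Finset.mem_filter.2 ⟨aux_mem_rep.2 hrep, ?_⟩
    rw [hp _ hrep.1, (key _ _ hErep.1 hFrep.1).1]
    exact hpE
  · intro E hE
    obtain ⟨hrep, -⟩ := Finset.mem_filter.1 hE
    rw [aux_mem_rep] at hrep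
    rw [← Finset.inter_union_distrib_left]
    exact Finset.inter_eq_left.2 hrep.1
  · intro EF hEF
    rw [Finset.mem_product] at hEF
    obtain ⟨hE, hF⟩ := hEF
    have hErep := aux_mem_rep.1 (Finset.mem_filter.1 hE).1
    have hFrep := aux_mem_rep.1 hF
    obtain ⟨k1, k2⟩ := key _ _ hErep.1 hFrep.1
    exact Prod.ext k1 k2

lemma aux_idx_of_mem_prefix {L : List (Set Attr × Set Attr)} {α : DBAtom Rel Attr Var Const}
    {xy : Set Attr × Set Attr} (hxy : xy ∈ primaryPrefix L α) :
    ∃ i, ∃ h : i < L.length, i < (primaryIdx L α).getD L.length ∧ L[i] = xy := by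
  obtain ⟨i, hi, hLi⟩ := List.getElem_of_mem hxy
  have hi' : i < min ((primaryIdx L α).getD L.length) L.length := by
    simpa [primaryPrefix, List.length_take] using hi
  refine ⟨i, (lt_min_iff.1 hi').2, (lt_min_iff.1 hi').1, ?_⟩
  have : (L.take ((primaryIdx L α).getD L.length))[i]'(by simpa [List.length_take] using hi') =
      L[i]'((lt_min_iff.1 hi').2) := List.getElem_take
  rw [← this]
  exact hLi

lemma aux_idx_mem_prefix {L : List (Set Attr × Set Attr)} {α : DBAtom Rel Attr Var Const}
    {i : ℕ} (hlen : i < L.length) (hn : i < (primaryIdx L α).getD L.length) :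
    L[i] ∈ primaryPrefix L α := by
  have h1 : i < (L.take ((primaryIdx L α).getD L.length)).length := by
    simp [List.length_take, lt_min_iff, hlen, hn]
  have h2 : (L.take ((primaryIdx L α).getD L.length))[i]'h1 = L[i]'hlen := List.getElem_take
  exact h2 ▸ List.getElem_mem h1

lemma aux_prefix_const {L : List (Set Attr × Set Attr)} {α : DBAtom Rel Attr Var Const}
    {xy : Set Attr × Set Attr} (hxy : xy ∈ primaryPrefix L α) {A : Attr}
    (hA : A ∈ xy.1 ∪ xy.2) : ∃ c, α.val A = DBTerm.const c := by
  obtain ⟨j, hjlen, hjn, hLj⟩ := aux_idx_of_mem_prefix hxy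
  have hnv : ¬ chainVarAt L α j := by
    by_cases h : ∃ i, chainVarAt L α i
    · have hn : (primaryIdx L α).getD L.length = Nat.find h := by
        simp [primaryIdx, dif_pos h]
      exact Nat.find_min h (hn ▸ hjn)
    · exact fun hc => h ⟨j, hc⟩
  have hLj' : L[j]? = some xy := by
    rw [List.getElem?_eq_getElem hjlen, hLj]
  cases hv : α.val A with
  | var v => exact absurd ⟨xy, hLj', A, hA, v, hv⟩ hnv
  | const c => exact ⟨c, rfl⟩

lemma aux_applyHom_const {h : Var → Const} {α : DBAtom Rel Attr Var Const} {A : Attr} {c : Const}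
    (hc : α.val A = DBTerm.const c) : (applyHom h α).val A = c := by
  simp [applyHom, hc]

lemma aux_agreesAt_applyHom {h : Var → Const} {α : DBAtom Rel Attr Var Const} {A : Attr}
    (hc : ∃ c, α.val A = DBTerm.const c) : agreesAt (applyHom h α) α A := by
  obtain ⟨c, hc⟩ := hc
  rw [agreesAt, aux_applyHom_const hc, hc]

lemma aux_match_notin {chain : Rel → List (Set Attr × Set Attr)}
    {Q : Finset (DBAtom Rel Attr Var Const)} (hsjf : sjf Q)
    (D : Finset (DBFact Rel Attr Const)) {h : Var → Const} {β : DBAtom Rel Attr Var Const}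
    (hβ : β ∈ Q) :
    applyHom h β ∉ dconf chain Q D ∧ applyHom h β ∉ dind chain Q D := by
  constructor
  · intro hm
    obtain ⟨-, α, hα, hrel, xy, hxy, -, B, hB, hnB⟩ := Finset.mem_filter.1 hm
    have hαβ : α = β := hsjf α hα β hβ hrel
    subst hαβ
    exact hnB (aux_agreesAt_applyHom (aux_prefix_const hxy (Set.mem_union_right _ hB)))
  · intro hm
    obtain ⟨-, α, hα, hrel, xy, hxy, A, hA, hnA⟩ := Finset.mem_filter.1 hm
    have hαβ : α = β := hsjf α hα β hβ hrel
    subst hαβ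
    exact hnA (aux_agreesAt_applyHom (aux_prefix_const hxy (Set.mem_union_left _ hA)))

lemma aux_conf_conflict {chain : Rel → List (Set Attr × Set Attr)}
    {Q : Finset (DBAtom Rel Attr Var Const)} {D : Finset (DBFact Rel Attr Const)}
    {f : DBFact Rel Attr Const} (hf : f ∈ dconf chain Q D) (h : Var → Const) :
    ∃ α ∈ Q, aux_conflict (chainFDs chain) f (applyHom h α) := by
  obtain ⟨-, α, hα, hrel, xy, hxy, hlhs, B, hB, hnB⟩ := Finset.mem_filter.1 hf
  have hxy' : xy ∈ chain α.rel := List.mem_of_mem_take hxy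
  refine ⟨α, hα, ⟨α.rel, xy.1, xy.2⟩, ⟨xy, hxy', rfl, rfl⟩, hrel.symm, rfl, ?_, B, hB, ?_⟩
  · intro A hA
    exact ((aux_applyHom_const (hlhs A hA)).symm : f.val A = (applyHom h α).val A)
  · obtain ⟨c, hc⟩ := aux_prefix_const hxy (Set.mem_union_right _ hB)
    rw [aux_applyHom_const hc]
    intro he
    exact hnB (by rw [agreesAt, hc, he])

lemma aux_entails_mono {E F : Finset (DBFact Rel Attr Const)}
    {Q : Finset (DBAtom Rel Attr Var Const)} (hEF : E ⊆ F)
    (h : entails E Q) : entails F Q := by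
  obtain ⟨h0, hh⟩ := h
  exact ⟨h0, fun α hα => hEF (hh α hα)⟩

lemma aux_repQ_sdiff_conf (chain : Rel → List (Set Attr × Set Attr))
    (Q : Finset (DBAtom Rel Attr Var Const)) (D : Finset (DBFact Rel Attr Const)) :
    repQ D (chainFDs chain) Q = repQ (D \ dconf chain Q D) (chainFDs chain) Q := by
  ext E
  simp only [repQ, Finset.mem_filter, aux_mem_rep]
  constructor
  · rintro ⟨⟨hsub, hsat, hmax⟩, hent⟩
    obtain ⟨h, hh⟩ := hent
    have hEsub : E ⊆ D \ dconf chain Q D := by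
      intro x hx
      rw [Finset.mem_sdiff]
      refine ⟨hsub hx, fun hc => ?_⟩
      obtain ⟨α, hα, hcf⟩ := aux_conf_conflict hc h
      exact (aux_satFDs_iff.1 hsat x hx _ (hh α hα)) hcf
    exact ⟨⟨hEsub, hsat, fun F hEF hFsub hF =>
      hmax F hEF (hFsub.trans Finset.sdiff_subset) hF⟩, h, hh⟩
  · rintro ⟨⟨hsub, hsat, hmax⟩, hent⟩
    obtain ⟨h, hh⟩ := hent
    refine ⟨⟨hsub.trans Finset.sdiff_subset, hsat, ?_⟩, h, hh⟩
    intro F hEF hFD hF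
    apply hmax F hEF _ hF
    intro x hx
    rw [Finset.mem_sdiff]
    refine ⟨hFD hx, fun hc => ?_⟩
    obtain ⟨α, hα, hcf⟩ := aux_conf_conflict hc h
    exact (aux_satFDs_iff.1 hF x hx _ (hEF (hh α hα))) hcf

lemma aux_ind_noconf {chain : Rel → List (Set Attr × Set Attr)} (hchain : canonicalChain chain)
    {Q : Finset (DBAtom Rel Attr Var Const)} {D : Finset (DBFact Rel Attr Const)}
    {g f : DBFact Rel Attr Const}
    (hg : g ∈ D \ (dconf chain Q D ∪ dind chain Q D)) (hf : f ∈ dind chain Q D) :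
    ¬ aux_conflict (chainFDs chain) g f := by
  rintro ⟨φ, ⟨XY, hXYchain, hl, hr⟩, hgrel, hfrel, hlhs, B, hB, hBne⟩
  obtain ⟨hfDc, α, hα, hαrel, xy, hxy, A0, hA0, hnA0⟩ := Finset.mem_filter.1 hf
  have hfD : f ∉ dconf chain Q D := (Finset.mem_sdiff.1 hfDc).2
  obtain ⟨hgD, hgCI⟩ := Finset.mem_sdiff.1 hg
  have hgC : g ∉ dconf chain Q D := fun hx => hgCI (Finset.mem_union_left _ hx)
  have hgI : g ∉ dind chain Q D := fun hx => hgCI (Finset.mem_union_right _ hx)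
  have hαg : α.rel = g.rel := by rw [hαrel, hfrel, ← hgrel]
  -- g agrees with α on all lhs of the primary prefix
  have hglhs : ∀ xy' ∈ primaryPrefix (chain α.rel) α, ∀ A ∈ xy'.1, agreesAt g α A := by
    intro xy' hxy' A hA
    by_contra hnA
    exact hgI (Finset.mem_filter.2 ⟨Finset.mem_sdiff.2 ⟨hgD, hgC⟩,
      α, hα, hαg, xy', hxy', A, hA, hnA⟩)
  -- g agrees with α on all rhs of the primary prefix
  have hgrhs : ∀ xy' ∈ primaryPrefix (chain α.rel) α, ∀ B' ∈ xy'.2, agreesAt g α B' := by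
    intro xy' hxy' B' hB'
    by_contra hnB
    exact hgC (Finset.mem_filter.2 ⟨hgD,
      α, hα, hαg, xy', hxy', fun A hA => hglhs xy' hxy' A hA, B', hB', hnB⟩)
  -- indices
  obtain ⟨i, hilen, hin, hLi⟩ := aux_idx_of_mem_prefix hxy
  have hXYchain' : XY ∈ chain α.rel := by
    have : φ.rel = α.rel := by rw [← hfrel, ← hαrel]
    rwa [this] at hXYchain
  obtain ⟨j, hjlen, hLj⟩ := List.getElem_of_mem hXYchain'
  have hpw := (hchain α.rel).1
  rcases le_or_gt i j with hij | hji
  · -- xy.1 ⊆ XY.1, so f and g agree at A0, contradiction with ¬ agreesAt f α A0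
    have hsub : xy.1 ⊆ XY.1 := by
      rcases eq_or_lt_of_le hij with heq | hlt
      · subst heq
        rw [← hLi, hLj]
      · have := List.pairwise_iff_getElem.1 hpw i j hilen hjlen hlt
        rw [hLi, hLj] at this
        exact this.1
    have hA0' : A0 ∈ φ.lhs := by rw [hl]; exact hsub hA0
    have hgf : g.val A0 = f.val A0 := hlhs A0 hA0'
    have hgag : agreesAt g α A0 := hglhs xy hxy A0 hA0
    exact hnA0 (by rw [agreesAt, ← hgf]; exact hgag)
  · -- XY is in the primary prefix; f would be in dconf
    have hXYpre : XY ∈ primaryPrefix (chain α.rel) α := by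
      have := aux_idx_mem_prefix (α := α) hjlen (lt_trans hji hin)
      rwa [hLj] at this
    apply hfD
    refine Finset.mem_filter.2 ⟨(Finset.mem_sdiff.1 hfDc).1, α, hα, hαrel, XY, hXYpre, ?_, ?_⟩
    · intro A hA
      have h1 : agreesAt g α A := hglhs XY hXYpre A hA
      have h2 : g.val A = f.val A := hlhs A (by rw [hl]; exact hA)
      rw [agreesAt, ← h2]; exact h1
    · refine ⟨B, by rw [hr] at hB; exact hB, ?_⟩
      have h1 : agreesAt g α B := hgrhs XY hXYpre B (by rw [hr] at hB; exact hB)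
      intro h2
      apply hBne
      have := h1.symm.trans h2
      exact DBTerm.const.inj this

end AuxStmt6

/-- For a canonical set of FDs with an LHS chain and an SJFCQ `Q`,
`rfreq(Q,D,Σ) = rfreq(Q, D \ (D_conf ∪ D_ind), Σ) × (|rep(D \ D_conf,Σ)| / |rep(D,Σ)|)`. -/
theorem stmt_6 {Rel Attr Var Const : Type*}
    (chain : Rel → List (Set Attr × Set Attr)) (hchain : canonicalChain chain)
    (Q : Finset (DBAtom Rel Attr Var Const)) (hQne : Q.Nonempty) (hsjf : sjf Q)
    (D : Finset (DBFact Rel Attr Const)) :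
    rfreq Q D (chainFDs chain) =
      rfreq Q (D \ (dconf chain Q D ∪ dind chain Q D)) (chainFDs chain) *
        (((rep (D \ dconf chain Q D) (chainFDs chain)).card : ℚ) /
          ((rep D (chainFDs chain)).card : ℚ)) := by
  classical
  have hIC : dind chain Q D ⊆ D \ dconf chain Q D := Finset.filter_subset _ _
  set S := chainFDs chain with hS
  set C := dconf chain Q D with hC
  set I := dind chain Q D with hI
  have hsplit : D \ C = (D \ (C ∪ I)) ∪ I := by
    ext x
    simp only [Finset.mem_sdiff, Finset.mem_union]
    constructor
    · rintro ⟨hxD, hxC⟩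
      by_cases hxI : x ∈ I
      · exact Or.inr hxI
      · exact Or.inl ⟨hxD, fun h => h.elim hxC hxI⟩
    · rintro (⟨hxD, hx⟩ | hxI)
      · exact ⟨hxD, fun h => hx (Or.inl h)⟩
      · exact ⟨(Finset.mem_sdiff.1 (hIC hxI)).1, (Finset.mem_sdiff.1 (hIC hxI)).2⟩
  have hd : Disjoint (D \ (C ∪ I)) I := by
    rw [Finset.disjoint_left]
    intro x hx hxI
    exact (Finset.mem_sdiff.1 hx).2 (Finset.mem_union_right _ hxI)
  have hnc : ∀ f ∈ D \ (C ∪ I), ∀ g ∈ I, ¬ aux_conflict S f g :=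
    fun f hf g hg => aux_ind_noconf hchain hf hg
  have hent : ∀ E, E ⊆ (D \ (C ∪ I)) ∪ I →
      (entails E Q ↔ entails (E ∩ (D \ (C ∪ I))) Q) := by
    intro E hE
    constructor
    · rintro ⟨h, hh⟩
      refine ⟨h, fun β hβ => Finset.mem_inter.2 ⟨hh β hβ, ?_⟩⟩
      have hmem : applyHom h β ∈ D \ C := by rw [hsplit]; exact hE (hh β hβ)
      obtain ⟨hnC, hnI⟩ := aux_match_notin (chain := chain) hsjf D hβ
      rw [Finset.mem_sdiff]
      exact ⟨(Finset.mem_sdiff.1 hmem).1,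
        fun hx => (Finset.mem_union.1 hx).elim hnC hnI⟩
    · exact fun h => aux_entails_mono Finset.inter_subset_left h
  have h1 : (repQ (D \ C) S Q).card = (repQ (D \ (C ∪ I)) S Q).card * (rep I S).card := by
    rw [hsplit]
    exact aux_card_split hd hnc (fun E => entails E Q) hent
  have h2 : (rep (D \ C) S).card = (rep (D \ (C ∪ I)) S).card * (rep I S).card := by
    rw [hsplit]
    have := aux_card_split hd hnc (fun _ => True) (fun E _ => Iff.rfl)
    simpa using this
  have h3 : repQ D S Q = repQ (D \ C) S Q := aux_repQ_sdiff_conf chain Q D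
  have hr : ((rep D S).card : ℚ) ≠ 0 :=
    Nat.cast_ne_zero.2 (Finset.card_ne_zero.2 (aux_rep_nonempty D S))
  have hr' : ((rep (D \ (C ∪ I)) S).card : ℚ) ≠ 0 :=
    Nat.cast_ne_zero.2 (Finset.card_ne_zero.2 (aux_rep_nonempty _ S))
  simp only [rfreq]
  rw [h3, h1, h2]
  push_cast
  field_simp
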